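/- Fix an odd integer p ≥ 3 and v ∈ [0,1], and define Γ(v,x) = x^p - p·x·v^{p-1} + (p-1)·v^p for x ∈ [-1,1]. If x, y, z ∈ [-1,1] are such that the 2×2 matrix with diagonal entries x, y and off-diagonal entries z is positive semi-definite, then Γ(v,x) + Γ(v,y) + 2Γ(v,z) ≥ 0. -/

import Mathlib

open Finset

lemma gamma_nonneg (p : ℕ) (t v : ℝ) (ht : 0 ≤ t) (hv : 0 ≤ v) :
    0 ≤ t^p - p*t*v^(p-1) + ((p:ℝ)-1)*v^p := by
  rcases Nat.eq_zero_or_pos p with h0 | h0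
  · subst h0; simp
  have key : t^p - p*t*v^(p-1) + ((p:ℝ)-1)*v^p
      = ∑ i ∈ range p, (t^i*v^(p-1-i) - v^(p-1)) * (t-v) := by
    have h1 : (∑ i ∈ range p, t ^ i * v ^ (p - 1 - i)) * (t - v) = t^p - v^p :=
      geom_sum₂_mul t v p
    have h2 : ∑ i ∈ range p, (t^i*v^(p-1-i) - v^(p-1)) * (t-v)
        = (∑ i ∈ range p, t ^ i * v ^ (p - 1 - i)) * (t - v) - (p:ℝ) * v^(p-1) * (t-v) := by
      simp only [sub_mul, Finset.sum_sub_distrib, Finset.sum_const, Finset.card_range,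
        nsmul_eq_mul, ← Finset.sum_mul]
      ring
    rw [h2, h1]
    have hvp : v^p = v * v^(p-1) := by
      rw [← pow_succ']
      congr 1
      omega
    rw [hvp]; ring
  rw [key]
  apply Finset.sum_nonneg
  intro i hi
  simp only [Finset.mem_range] at hi
  have hsplit : v^(p-1) = v^i * v^(p-1-i) := by
    rw [← pow_add]; congr 1; omega
  rw [hsplit]
  have : (t^i*(v^(p-1-i)) - v^i * v^(p-1-i)) = (t^i - v^i) * v^(p-1-i) := by ring
  rw [this]
  rcases le_total v t with h | h
  · have h1 : v^i ≤ t^i := pow_le_pow_left₀ hv h i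
    have h2 : (0:ℝ) ≤ v^(p-1-i) := pow_nonneg hv _
    nlinarith [mul_nonneg (mul_nonneg (sub_nonneg.2 h1) (sub_nonneg.2 h)) h2]
  · have h1 : t^i ≤ v^i := pow_le_pow_left₀ ht h i
    have h2 : (0:ℝ) ≤ v^(p-1-i) := pow_nonneg hv _
    nlinarith [mul_nonneg (mul_nonneg_iff.2 (Or.inr ⟨sub_nonpos.2 h1, sub_nonpos.2 h⟩)) h2]


lemma conv_ineq (p : ℕ) (v w m : ℝ) (hv : 0 ≤ v) (hvw : v ≤ w) (hwm : w ≤ m) :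
    (p:ℝ)*v^(p-1)*(m-w) ≤ m^p - w^p := by
  rw [← geom_sum₂_mul m w p]
  have hw : 0 ≤ w := hv.trans hvw
  have hsum : (p:ℝ)*v^(p-1) ≤ ∑ i ∈ range p, m^i * w^(p-1-i) := by
    have : (p:ℝ)*v^(p-1) = ∑ _i ∈ range p, v^(p-1) := by
      simp [Finset.sum_const, Finset.card_range]
    rw [this]
    apply Finset.sum_le_sum
    intro i hi
    simp only [Finset.mem_range] at hi
    have hsplit : v^(p-1) = v^i * v^(p-1-i) := by
      rw [← pow_add]; congr 1; omega
    rw [hsplit]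
    exact mul_le_mul (pow_le_pow_left₀ hv (hvw.trans hwm) i)
      (pow_le_pow_left₀ hv hvw _) (pow_nonneg hv _) (pow_nonneg (hv.trans (hvw.trans hwm)) _)
  exact mul_le_mul_of_nonneg_right hsum (by linarith)

lemma sq_sub_aux (p : ℕ) (hp : p ≠ 0) (x y : ℝ) (hy0 : 0 ≤ y) (hyx : y ≤ x) :
    (x + y - 2*Real.sqrt (x*y))^p ≤ x^p + y^p - 2*(Real.sqrt (x*y))^p := by
  have hx0 : 0 ≤ x := hy0.trans hyx
  set u := Real.sqrt x with hu
  set t := Real.sqrt y with ht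
  have hu0 : 0 ≤ u := Real.sqrt_nonneg x
  have ht0 : 0 ≤ t := Real.sqrt_nonneg y
  have htu : t ≤ u := Real.sqrt_le_sqrt hyx
  have hx : x = u^2 := (Real.sq_sqrt hx0).symm
  have hy : y = t^2 := (Real.sq_sqrt hy0).symm
  have hm : Real.sqrt (x*y) = u*t := by rw [Real.sqrt_mul hx0]
  have key : (u-t)^p + t^p ≤ u^p := by
    have := pow_add_pow_le (sub_nonneg.2 htu) ht0 hp
    simpa using this
  have hA : (0:ℝ) ≤ (u-t)^p := pow_nonneg (by linarith) p
  have hT : (0:ℝ) ≤ t^p := pow_nonneg ht0 p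
  rw [hm, hx, hy]
  have e1 : (u^2 + t^2 - 2*(u*t)) = (u-t)^2 := by ring
  rw [e1, ← pow_mul, ← pow_mul, ← pow_mul, mul_comm 2 p, pow_mul, pow_mul, pow_mul, mul_pow]
  nlinarith [key, hA, hT]

lemma sq_sub (p : ℕ) (hp : p ≠ 0) (x y : ℝ) (hx0 : 0 ≤ x) (hy0 : 0 ≤ y) :
    (x + y - 2*Real.sqrt (x*y))^p ≤ x^p + y^p - 2*(Real.sqrt (x*y))^p := by
  rcases le_total y x with h | h
  · exact sq_sub_aux p hp x y hy0 h
  · have := sq_sub_aux p hp y x hx0 h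
    rw [mul_comm y x] at this
    have e : (x + y - 2*Real.sqrt (x*y))^p = (y + x - 2*Real.sqrt (x*y))^p := by ring_nf
    rw [e]; linarith


/-- For odd `p ≥ 3`, `v ∈ [0,1]`, and `x, y, z ∈ [-1,1]` such that the matrix
`[[x, z], [z, y]]` is positive semi-definite,
`Γ(v,x) + Γ(v,y) + 2Γ(v,z) ≥ 0` where `Γ(v,x) = x^p - p x v^(p-1) + (p-1) v^p`. -/
theorem stmt3 (p : ℕ) (hp : 3 ≤ p) (hodd : Odd p) (v : ℝ) (hv : v ∈ Set.Icc (0:ℝ) 1)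
    (x y z : ℝ) (hx : x ∈ Set.Icc (-1:ℝ) 1) (hy : y ∈ Set.Icc (-1:ℝ) 1)
    (hz : z ∈ Set.Icc (-1:ℝ) 1)
    (hPSD : (Matrix.of !![x, z; z, y]).PosSemidef) :
    0 ≤ (x ^ p - p * x * v ^ (p - 1) + ((p:ℝ) - 1) * v ^ p)
      + (y ^ p - p * y * v ^ (p - 1) + ((p:ℝ) - 1) * v ^ p)
      + 2 * (z ^ p - p * z * v ^ (p - 1) + ((p:ℝ) - 1) * v ^ p) := by
  obtain ⟨hv0, hv1⟩ := hv
  have hx0 : 0 ≤ x := by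
    have h := hPSD.dotProduct_mulVec_nonneg ![1,0]
    simp [Matrix.mulVec, dotProduct] at h; exact h
  have hy0 : 0 ≤ y := by
    have h := hPSD.dotProduct_mulVec_nonneg ![0,1]
    simp [Matrix.mulVec, dotProduct] at h; exact h
  have hquad : ∀ t:ℝ, 0 ≤ x*(t*t) + (2*z)*t + y := by
    intro t
    have h := hPSD.dotProduct_mulVec_nonneg ![t,1]
    rw [show Matrix.of !![x, z; z, y] = !![x, z; z, y] from rfl] at h
    simp [Matrix.mulVec, dotProduct] at h
    nlinarith [h]
  have hdet : z^2 ≤ x*y := by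
    have h := discrim_le_zero hquad
    rw [discrim] at h
    nlinarith [h]
  have hp3 : (3:ℝ) ≤ (p:ℝ) := by exact_mod_cast hp
  have hC : 0 ≤ ((p:ℝ)-1) * v^p := mul_nonneg (by linarith) (pow_nonneg hv0 p)
  rcases le_or_gt 0 z with hz0 | hz0
  · have g1 := gamma_nonneg p x v hx0 hv0
    have g2 := gamma_nonneg p y v hy0 hv0
    have g3 := gamma_nonneg p z v hz0 hv0
    linarith
  · obtain ⟨w, rfl⟩ : ∃ w, z = -w := ⟨-z, by ring⟩
    have hw0 : 0 < w := by linarith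
    have hdet' : w^2 ≤ x*y := by nlinarith [hdet]
    have g1 := gamma_nonneg p x v hx0 hv0
    have g2 := gamma_nonneg p y v hy0 hv0
    simp only [hodd.neg_pow]
    rcases le_or_gt w v with hwv | hwv
    · have hpow : w^p ≤ w * v^(p-1) := by
        have h1 : w^p = w * w^(p-1) := by
          rw [← pow_succ']
          congr 1; omega
        rw [h1]
        exact mul_le_mul_of_nonneg_left (pow_le_pow_left₀ hw0.le hwv _) hw0.le
      have hwv' : 0 ≤ w * v^(p-1) := mul_nonneg hw0.le (pow_nonneg hv0 _)
      nlinarith [hpow, hwv', hC, g1, g2, hp3]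
    · have hwm : w ≤ Real.sqrt (x*y) := by
        rw [show w = Real.sqrt (w^2) by rw [Real.sqrt_sq hw0.le]]
        exact Real.sqrt_le_sqrt hdet'
      have F1 := conv_ineq p v w (Real.sqrt (x*y)) hv0 hwv.le hwm
      have F2 := sq_sub p (by omega) x y hx0 hy0
      have hs0 : 0 ≤ x + y - 2*Real.sqrt (x*y) := by
        nlinarith [sq_nonneg (Real.sqrt x - Real.sqrt y), Real.sq_sqrt hx0, Real.sq_sqrt hy0,
          Real.sqrt_mul hx0 y]
      have F3 := gamma_nonneg p (x + y - 2*Real.sqrt (x*y)) v hs0 hv0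
      linarith [F1, F2, F3, hC]
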